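/- Assume both the buyer distribution and the seller distribution are regular. Then for every bilateral trading mechanism M = (x, p^B, p^S) that is IR, BIC and ex-ante WBB, GFT(M) ≤ Σ_{b ∈ T^B} Σ_{s ∈ T^S} f(b)·g(s)·max(0, b + φ(b) − s − τ(s)). -/

import Mathlib

open Finset

/-- Buyer's Myerson virtual value:
`φ(β_r) = β_r − (β_{r+1} − β_r)·(Σ_{l>r} f(β_l))/f(β_r)` for `r < K-1`, `φ(β_{K-1}) = β_{K-1}`. -/
noncomputable def buyerVirtual (K : ℕ) (β f : Fin K → ℝ) (r : Fin K) : ℝ :=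
  β r - ((if h : (r : ℕ) + 1 < K then β ⟨(r : ℕ) + 1, h⟩ else β r) - β r)
      * (∑ l ∈ Finset.Ioi r, f l) / f r

/-- Seller's Myerson virtual value:
`τ(α_1) = α_1`, `τ(α_r) = α_r + (α_r − α_{r−1})·(Σ_{l<r} g(α_l))/g(α_r)` for `r > 1`. -/
noncomputable def sellerVirtual (K' : ℕ) (α g : Fin K' → ℝ) (r : Fin K') : ℝ :=
  α r + (α r - (if 0 < (r : ℕ) then
        α ⟨(r : ℕ) - 1, Nat.lt_of_le_of_lt (Nat.sub_le _ _) r.isLt⟩ else α r))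
      * (∑ l ∈ Finset.Iio r, g l) / g r

lemma myIio_zero {K : ℕ} (h : 0 < K) : Finset.Iio (⟨0, h⟩ : Fin K) = ∅ := by
  ext r; simp [Fin.lt_def]

lemma myIio_succ {K : ℕ} (n : ℕ) (h : n + 1 < K) :
    Finset.Iio (⟨n + 1, h⟩ : Fin K)
      = insert ⟨n, Nat.lt_of_succ_lt h⟩ (Finset.Iio ⟨n, Nat.lt_of_succ_lt h⟩) := by
  ext ⟨v, hv⟩
  simp only [Finset.mem_Iio, Finset.mem_insert, Fin.mk_lt_mk, Fin.mk.injEq]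
  omega

lemma myIoi_top {K : ℕ} (s : Fin K) (h : (s : ℕ) + 1 = K) : Finset.Ioi s = ∅ := by
  ext ⟨v, hv⟩
  simp only [Finset.mem_Ioi, Finset.notMem_empty, iff_false, not_lt, Fin.le_def]
  omega

lemma myIoi_succ {K : ℕ} (n : ℕ) (h : n + 1 < K) :
    Finset.Ioi (⟨n, Nat.lt_of_succ_lt h⟩ : Fin K)
      = insert ⟨n + 1, h⟩ (Finset.Ioi ⟨n + 1, h⟩) := by
  ext ⟨v, hv⟩
  simp only [Finset.mem_Ioi, Finset.mem_insert, Fin.mk_lt_mk, Fin.mk.injEq]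
  omega

lemma chain_Iio {K : ℕ} (d U : Fin K → ℝ)
    (h0 : ∀ h : 0 < K, 0 ≤ U ⟨0, h⟩)
    (hstep : ∀ (n : ℕ) (h : n + 1 < K),
      U ⟨n, Nat.lt_of_succ_lt h⟩ + d ⟨n, Nat.lt_of_succ_lt h⟩ ≤ U ⟨n + 1, h⟩) :
    ∀ l : Fin K, ∑ r ∈ Finset.Iio l, d r ≤ U l := by
  intro ⟨n, hn⟩
  induction n with
  | zero => rw [myIio_zero hn]; simpa using h0 hn
  | succ m ih =>
      rw [myIio_succ m hn, Finset.sum_insert (by simp)]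
      have h1 := ih (Nat.lt_of_succ_lt hn)
      have h2 := hstep m hn
      linarith

lemma chain_Ioi {K : ℕ} (d V : Fin K → ℝ)
    (htop : ∀ (s : Fin K), (s : ℕ) + 1 = K → 0 ≤ V s)
    (hstep : ∀ (n : ℕ) (h : n + 1 < K),
      V ⟨n + 1, h⟩ + d ⟨n + 1, h⟩ ≤ V ⟨n, Nat.lt_of_succ_lt h⟩) :
    ∀ s : Fin K, ∑ r ∈ Finset.Ioi s, d r ≤ V s := by
  have key : ∀ m : ℕ, ∀ n : ℕ, ∀ hn : n < K, K - n ≤ m + 1 →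
      ∑ r ∈ Finset.Ioi (⟨n, hn⟩ : Fin K), d r ≤ V ⟨n, hn⟩ := by
    intro m
    induction m with
    | zero =>
        intro n hn hs
        have h' : n + 1 = K := by omega
        rw [myIoi_top _ h']; exact htop _ h'
    | succ m ih =>
        intro n hn hs
        by_cases hc : n + 1 < K
        · rw [myIoi_succ n hc, Finset.sum_insert (by simp)]
          have h1 := ih (n + 1) hc (by omega)
          have h2 := hstep n hc
          linarith
        · have h' : n + 1 = K := by omega
          rw [myIoi_top _ h']; exact htop _ h'
  intro ⟨n, hn⟩
  exact key K n hn (by omega)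

lemma swap_Ioi {K : ℕ} (w c : Fin K → ℝ) :
    ∑ r, (∑ l ∈ Finset.Ioi r, w l) * c r = ∑ l, w l * ∑ r ∈ Finset.Iio l, c r := by
  simp_rw [Finset.sum_mul, Finset.mul_sum]
  exact Finset.sum_comm' (by simp)

lemma swap_Iio {K : ℕ} (w c : Fin K → ℝ) :
    ∑ r, (∑ l ∈ Finset.Iio r, w l) * c r = ∑ l, w l * ∑ r ∈ Finset.Ioi l, c r := by
  simp_rw [Finset.sum_mul, Finset.mul_sum]
  exact Finset.sum_comm' (by simp)

/-- Buyer-side Myerson revenue bound. -/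
lemma buyer_bound (K K' : ℕ) (hK : 0 < K)
    (β f : Fin K → ℝ) (hf : ∀ r, 0 < f r) (g : Fin K' → ℝ)
    (x pB : Fin K → Fin K' → ℝ)
    (hBICb : ∀ b b' : Fin K,
      ∑ s, g s * (β b * x b' s - pB b' s) ≤ ∑ s, g s * (β b * x b s - pB b s))
    (hIRb : ∀ b : Fin K, 0 ≤ ∑ s, g s * (β b * x b s - pB b s)) :
    ∑ b, f b * (∑ s, g s * pB b s)
      ≤ ∑ b, f b * buyerVirtual K β f b * (∑ s, g s * x b s) := by
  set XB : Fin K → ℝ := fun b => ∑ s, g s * x b s with hXBdef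
  set UB : Fin K → ℝ := fun b => ∑ s, g s * (β b * x b s - pB b s) with hUBdef
  set PB : Fin K → ℝ := fun b => ∑ s, g s * pB b s with hPBdef
  set D : Fin K → ℝ := fun r =>
    (if h : (r : ℕ) + 1 < K then β ⟨(r : ℕ) + 1, h⟩ else β r) - β r with hDdef
  have hUB : ∀ b, UB b = β b * XB b - PB b := by
    intro b
    simp only [hUBdef, hXBdef, hPBdef, Finset.mul_sum, ← Finset.sum_sub_distrib]
    exact Finset.sum_congr rfl fun s _ => by ring
  have hstep : ∀ (n : ℕ) (h : n + 1 < K),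
      UB ⟨n, Nat.lt_of_succ_lt h⟩
        + (fun r => D r * XB r) ⟨n, Nat.lt_of_succ_lt h⟩ ≤ UB ⟨n + 1, h⟩ := by
    intro n h
    have hb := hBICb ⟨n + 1, h⟩ ⟨n, Nat.lt_of_succ_lt h⟩
    have heq : ∑ s, g s * (β ⟨n + 1, h⟩ * x ⟨n, Nat.lt_of_succ_lt h⟩ s
          - pB ⟨n, Nat.lt_of_succ_lt h⟩ s)
        = UB ⟨n, Nat.lt_of_succ_lt h⟩
          + (β ⟨n + 1, h⟩ - β ⟨n, Nat.lt_of_succ_lt h⟩) * XB ⟨n, Nat.lt_of_succ_lt h⟩ := by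
      simp only [hUBdef, hXBdef, Finset.mul_sum, ← Finset.sum_add_distrib]
      exact Finset.sum_congr rfl fun s _ => by ring
    have hD : D ⟨n, Nat.lt_of_succ_lt h⟩
        = β ⟨n + 1, h⟩ - β ⟨n, Nat.lt_of_succ_lt h⟩ := by
      simp only [hDdef]
      rw [dif_pos h]
    dsimp only
    rw [hD]
    rw [heq] at hb
    exact hb
  have hchain := chain_Iio (fun r => D r * XB r) UB (fun _ => hIRb _) hstep
  have hφ : ∀ b, f b * buyerVirtual K β f b * XB b
      = f b * β b * XB b - (∑ l ∈ Finset.Ioi b, f l) * (D b * XB b) := by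
    intro b
    have hfb := (hf b).ne'
    simp only [buyerVirtual, hDdef]
    field_simp
  calc ∑ b, f b * PB b = ∑ b, (f b * β b * XB b - f b * UB b) := by
        refine Finset.sum_congr rfl fun b _ => ?_
        rw [hUB b]; ring
    _ = ∑ b, f b * β b * XB b - ∑ b, f b * UB b := Finset.sum_sub_distrib _ _
    _ ≤ ∑ b, f b * β b * XB b
        - ∑ b, f b * (∑ r ∈ Finset.Iio b, D r * XB r) := by
        have : ∑ b, f b * (∑ r ∈ Finset.Iio b, D r * XB r) ≤ ∑ b, f b * UB b :=
          Finset.sum_le_sum fun b _ =>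
            mul_le_mul_of_nonneg_left (hchain b) (hf b).le
        linarith
    _ = ∑ b, f b * β b * XB b
        - ∑ r, (∑ l ∈ Finset.Ioi r, f l) * (D r * XB r) := by
        rw [swap_Ioi f (fun r => D r * XB r)]
    _ = ∑ b, f b * buyerVirtual K β f b * XB b := by
        rw [← Finset.sum_sub_distrib]
        exact Finset.sum_congr rfl fun b _ => (hφ b).symm

/-- Seller-side Myerson payment bound. -/
lemma seller_bound (K K' : ℕ) (hK' : 0 < K')
    (α g : Fin K' → ℝ) (hg : ∀ r, 0 < g r) (f : Fin K → ℝ)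
    (x pS : Fin K → Fin K' → ℝ)
    (hBICs : ∀ s s' : Fin K',
      ∑ b, f b * (pS b s' - α s * x b s') ≤ ∑ b, f b * (pS b s - α s * x b s))
    (hIRs : ∀ s : Fin K', 0 ≤ ∑ b, f b * (pS b s - α s * x b s)) :
    ∑ s, g s * sellerVirtual K' α g s * (∑ b, f b * x b s)
      ≤ ∑ s, g s * (∑ b, f b * pS b s) := by
  set XS : Fin K' → ℝ := fun s => ∑ b, f b * x b s with hXSdef
  set VS : Fin K' → ℝ := fun s => ∑ b, f b * (pS b s - α s * x b s) with hVSdef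
  set PS : Fin K' → ℝ := fun s => ∑ b, f b * pS b s with hPSdef
  set E : Fin K' → ℝ := fun r => α r - (if 0 < (r : ℕ) then
      α ⟨(r : ℕ) - 1, Nat.lt_of_le_of_lt (Nat.sub_le _ _) r.isLt⟩ else α r) with hEdef
  have hVS : ∀ s, VS s = PS s - α s * XS s := by
    intro s
    simp only [hVSdef, hXSdef, hPSdef, Finset.mul_sum, ← Finset.sum_sub_distrib]
    exact Finset.sum_congr rfl fun b _ => by ring
  have hstep : ∀ (n : ℕ) (h : n + 1 < K'),
      VS ⟨n + 1, h⟩ + (fun r => E r * XS r) ⟨n + 1, h⟩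
        ≤ VS ⟨n, Nat.lt_of_succ_lt h⟩ := by
    intro n h
    have hb := hBICs ⟨n, Nat.lt_of_succ_lt h⟩ ⟨n + 1, h⟩
    have heq : ∑ b, f b * (pS b ⟨n + 1, h⟩
          - α ⟨n, Nat.lt_of_succ_lt h⟩ * x b ⟨n + 1, h⟩)
        = VS ⟨n + 1, h⟩
          + (α ⟨n + 1, h⟩ - α ⟨n, Nat.lt_of_succ_lt h⟩) * XS ⟨n + 1, h⟩ := by
      simp only [hVSdef, hXSdef, Finset.mul_sum, ← Finset.sum_add_distrib]
      exact Finset.sum_congr rfl fun b _ => by ring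
    have hE : E ⟨n + 1, h⟩ = α ⟨n + 1, h⟩ - α ⟨n, Nat.lt_of_succ_lt h⟩ := by
      simp only [hEdef]
      rw [if_pos (Nat.succ_pos n)]
      norm_num
    dsimp only
    rw [hE]
    rw [heq] at hb
    exact hb
  have hchain := chain_Ioi (fun r => E r * XS r) VS (fun s _ => hIRs s) hstep
  have hτ : ∀ s, g s * sellerVirtual K' α g s * XS s
      = g s * α s * XS s + (∑ l ∈ Finset.Iio s, g l) * (E s * XS s) := by
    intro s
    have hgs := (hg s).ne'
    simp only [sellerVirtual, hEdef]
    field_simp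
  calc ∑ s, g s * sellerVirtual K' α g s * XS s
      = ∑ s, g s * α s * XS s
        + ∑ r, (∑ l ∈ Finset.Iio r, g l) * (E r * XS r) := by
        rw [← Finset.sum_add_distrib]
        exact Finset.sum_congr rfl fun s _ => hτ s
    _ = ∑ s, g s * α s * XS s
        + ∑ s, g s * (∑ r ∈ Finset.Ioi s, E r * XS r) := by
        rw [swap_Iio g (fun r => E r * XS r)]
    _ ≤ ∑ s, g s * α s * XS s + ∑ s, g s * VS s := by
        have : ∑ s, g s * (∑ r ∈ Finset.Ioi s, E r * XS r) ≤ ∑ s, g s * VS s :=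
          Finset.sum_le_sum fun s _ =>
            mul_le_mul_of_nonneg_left (hchain s) (hg s).le
        linarith
    _ = ∑ s, g s * PS s := by
        rw [← Finset.sum_add_distrib]
        refine Finset.sum_congr rfl fun s _ => ?_
        rw [hVS s]; ring


lemma term_le_max (w c t : ℝ) (hw : 0 ≤ w) (ht0 : 0 ≤ t) (ht1 : t ≤ 1) :
    w * c * t ≤ w * max 0 c := by
  rcases le_total c 0 with hc | hc
  · rw [max_eq_left hc]
    nlinarith [mul_nonneg (mul_nonneg hw ht0) (neg_nonneg.2 hc)]
  · rw [max_eq_right hc]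
    nlinarith [mul_nonneg (mul_nonneg hw hc) (sub_nonneg.2 ht1)]

/-- in bilateral trading with regular buyer and seller distributions, for any
IR, BIC, ex-ante WBB mechanism `M = (x, pB, pS)`,
`GFT(M) ≤ Σ_{b,s} f(b)g(s)·max(0, b + φ(b) − s − τ(s))`. -/
theorem stmt_6 (K K' : ℕ) (hK : 0 < K) (hK' : 0 < K')
    (β f : Fin K → ℝ) (hβ : StrictMono β) (hf : ∀ r, 0 < f r) (hf1 : ∑ r, f r = 1)
    (α g : Fin K' → ℝ) (hα : StrictMono α) (hg : ∀ r, 0 < g r) (hg1 : ∑ r, g r = 1)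
    (hregB : Monotone (buyerVirtual K β f))
    (hregS : Monotone (sellerVirtual K' α g))
    (x pB pS : Fin K → Fin K' → ℝ)
    (hx01 : ∀ b s, x b s ∈ Set.Icc (0 : ℝ) 1)
    (hBICb : ∀ b b' : Fin K,
      ∑ s, g s * (β b * x b' s - pB b' s) ≤ ∑ s, g s * (β b * x b s - pB b s))
    (hBICs : ∀ s s' : Fin K',
      ∑ b, f b * (pS b s' - α s * x b s') ≤ ∑ b, f b * (pS b s - α s * x b s))
    (hIRb : ∀ b : Fin K, 0 ≤ ∑ s, g s * (β b * x b s - pB b s))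
    (hIRs : ∀ s : Fin K', 0 ≤ ∑ b, f b * (pS b s - α s * x b s))
    (hWBB : 0 ≤ ∑ b, ∑ s, f b * g s * (pB b s - pS b s)) :
    ∑ b, ∑ s, f b * g s * (β b - α s) * x b s
      ≤ ∑ b, ∑ s, f b * g s *
          max 0 (β b + buyerVirtual K β f b - α s - sellerVirtual K' α g s) := by
  have hbuyer := buyer_bound K K' hK β f hf g x pB hBICb hIRb
  have hseller := seller_bound K K' hK' α g hg f x pS hBICs hIRs
  -- WBB rearranged
  have h1 : ∑ b, f b * (∑ s, g s * pB b s) = ∑ b, ∑ s, f b * g s * pB b s := by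
    refine Finset.sum_congr rfl fun b _ => ?_
    rw [Finset.mul_sum]
    exact Finset.sum_congr rfl fun s _ => by ring
  have h2 : ∑ s, g s * (∑ b, f b * pS b s) = ∑ b, ∑ s, f b * g s * pS b s := by
    rw [Finset.sum_comm]
    refine Finset.sum_congr rfl fun s _ => ?_
    rw [Finset.mul_sum]
    exact Finset.sum_congr rfl fun b _ => by ring
  have h3 : ∑ b, ∑ s, f b * g s * (pB b s - pS b s)
      = ∑ b, ∑ s, f b * g s * pB b s - ∑ b, ∑ s, f b * g s * pS b s := by
    rw [← Finset.sum_sub_distrib]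
    refine Finset.sum_congr rfl fun b _ => ?_
    rw [← Finset.sum_sub_distrib]
    exact Finset.sum_congr rfl fun s _ => by ring
  have hWBB' : ∑ s, g s * (∑ b, f b * pS b s) ≤ ∑ b, f b * (∑ s, g s * pB b s) := by
    rw [h1, h2]
    rw [h3] at hWBB
    linarith
  -- interim to double sums
  have hA : ∑ b, f b * buyerVirtual K β f b * (∑ s, g s * x b s)
      = ∑ b, ∑ s, f b * g s * buyerVirtual K β f b * x b s := by
    refine Finset.sum_congr rfl fun b _ => ?_
    rw [Finset.mul_sum]
    exact Finset.sum_congr rfl fun s _ => by ring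
  have hB : ∑ s, g s * sellerVirtual K' α g s * (∑ b, f b * x b s)
      = ∑ b, ∑ s, f b * g s * sellerVirtual K' α g s * x b s := by
    rw [Finset.sum_comm]
    refine Finset.sum_congr rfl fun s _ => ?_
    rw [Finset.mul_sum]
    exact Finset.sum_congr rfl fun b _ => by ring
  have hvirt : ∑ b, ∑ s, f b * g s * sellerVirtual K' α g s * x b s
      ≤ ∑ b, ∑ s, f b * g s * buyerVirtual K β f b * x b s := by
    rw [← hA, ← hB]
    linarith
  calc ∑ b, ∑ s, f b * g s * (β b - α s) * x b s
      ≤ ∑ b, ∑ s, f b * g s * (β b - α s) * x b s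
        + (∑ b, ∑ s, f b * g s * buyerVirtual K β f b * x b s
          - ∑ b, ∑ s, f b * g s * sellerVirtual K' α g s * x b s) := by
        linarith
    _ = ∑ b, ∑ s, f b * g s
          * (β b + buyerVirtual K β f b - α s - sellerVirtual K' α g s) * x b s := by
        rw [← Finset.sum_sub_distrib, ← Finset.sum_add_distrib]
        refine Finset.sum_congr rfl fun b _ => ?_
        rw [← Finset.sum_sub_distrib, ← Finset.sum_add_distrib]
        exact Finset.sum_congr rfl fun s _ => by ring
    _ ≤ ∑ b, ∑ s, f b * g s *
          max 0 (β b + buyerVirtual K β f b - α s - sellerVirtual K' α g s) := by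
        refine Finset.sum_le_sum fun b _ => Finset.sum_le_sum fun s _ => ?_
        exact term_le_max (f b * g s) _ (x b s)
          (mul_nonneg (hf b).le (hg s).le) (hx01 b s).1 (hx01 b s).2
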